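/- Let D : ℝ^d → [0,∞) be a depth function with maximum value α_max and trimmed regions D_α = {z : D(z) ≥ α}. The map α ↦ D_α is continuous on (0, α_max) with respect to the Hausdorff metric if and only if D is strictly monotone for P, i.e., for every α ∈ (0, α_max), D_α equals the closure of {z : D(z) > α}. -/
import Mathlib


open Filter Metric Set Topology

/-- The map `α ↦ D_α` is continuous on `(0, αmax)` w.r.t. the Hausdorff metric
if and only if `D` is strictly monotone, i.e. `D_α = closure {z | α < D z}`
for every `α ∈ (0, αmax)`. -/
theorem trimmed_regions_continuous_iff_strictly_monotone {d : ℕ}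
    (D : EuclideanSpace ℝ (Fin d) → ℝ)
    (hnn : ∀ z, 0 ≤ D z)
    (husc : UpperSemicontinuous D)
    (hvan : Tendsto D (cocompact (EuclideanSpace ℝ (Fin d))) (nhds 0))
    (αmax : ℝ) (hmax : IsGreatest (Set.range D) αmax) (hαpos : 0 < αmax) :
    (∀ α₀ ∈ Set.Ioo (0 : ℝ) αmax, ∀ ε > 0, ∃ δ > 0, ∀ β ∈ Set.Ioo (0 : ℝ) αmax,
        |β - α₀| < δ → hausdorffDist {z | β ≤ D z} {z | α₀ ≤ D z} < ε)
      ↔ (∀ α ∈ Set.Ioo (0 : ℝ) αmax, {z | α ≤ D z} = closure {z | α < D z}) := by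
  classical
  obtain ⟨⟨x₀, hx₀⟩, hub⟩ := hmax
  -- closedness of the trimmed regions
  have hclosed : ∀ α : ℝ, IsClosed {z | α ≤ D z} := by
    intro α
    have h1 : IsOpen (D ⁻¹' Iio α) := husc.isOpen_preimage α
    have h2 : {z | α ≤ D z} = (D ⁻¹' Iio α)ᶜ := by
      ext z; simp [not_lt]
    rw [h2]
    exact h1.isClosed_compl
  -- compactness of the trimmed regions for positive levels
  have hcompact : ∀ α : ℝ, 0 < α → IsCompact {z | α ≤ D z} := by
    intro α hα
    have hev : ∀ᶠ x in cocompact (EuclideanSpace ℝ (Fin d)), D x < α :=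
      hvan (Iio_mem_nhds hα)
    obtain ⟨K, hKc, hK⟩ := (hasBasis_cocompact.eventually_iff).1 hev
    have hsub : {z | α ≤ D z} ⊆ K := by
      intro z hz
      by_contra hzK
      exact absurd hz (not_le.2 (hK hzK))
    exact hKc.of_isClosed_subset (hclosed α) hsub
  -- nonemptiness
  have hne : ∀ α : ℝ, α ≤ αmax → ({z | α ≤ D z} : Set _).Nonempty := by
    intro α hα
    exact ⟨x₀, by simpa [Set.mem_setOf_eq, hx₀] using hα⟩
  have hne' : ∀ α : ℝ, α < αmax → ({z | α < D z} : Set _).Nonempty := by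
    intro α hα
    exact ⟨x₀, by simpa [Set.mem_setOf_eq, hx₀] using hα⟩
  have hsubcl : ∀ α : ℝ, closure {z | α < D z} ⊆ {z | α ≤ D z} := by
    intro α
    have : {z | α < D z} ⊆ {z | α ≤ D z} := fun z (hz : α < D z) => hz.le
    exact (hclosed α).closure_subset_iff.2 this
  constructor
  · -- continuity ⇒ strict monotonicity
    intro hcont α hα
    refine Subset.antisymm ?_ (hsubcl α)
    intro x hx
    by_contra hxcl
    have hclne : (closure {z | α < D z}).Nonempty := (hne' α hα.2).closure
    have hεpos : 0 < infDist x (closure {z | α < D z}) :=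
      (isClosed_closure.notMem_iff_infDist_pos hclne).1 hxcl
    set ε := infDist x (closure {z | α < D z}) with hε
    obtain ⟨δ, hδpos, hδ⟩ := hcont α hα ε hεpos
    set β := min (α + δ / 2) ((α + αmax) / 2) with hβ
    have hαβ : α < β := by
      apply lt_min <;> [linarith; linarith [hα.2]]
    have hβmem : β ∈ Set.Ioo (0 : ℝ) αmax := by
      constructor
      · linarith [hα.1]
      · exact lt_of_le_of_lt (min_le_right _ _) (by linarith [hα.2])
    have hβδ : |β - α| < δ := by
      have h1 : β ≤ α + δ / 2 := min_le_left _ _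
      rw [abs_of_pos (by linarith)]
      linarith
    have hH := hδ β hβmem hβδ
    -- but the Hausdorff distance is at least ε
    have hβne : ({z | β ≤ D z} : Set _).Nonempty := hne β hβmem.2.le
    have hfin : EMetric.hausdorffEdist {z | α ≤ D z} {z | β ≤ D z} ≠ ⊤ :=
      hausdorffEdist_ne_top_of_nonempty_of_bounded (hne α hα.2.le) hβne
        (hcompact α hα.1).isBounded (hcompact β hβmem.1).isBounded
    have h1 : infDist x {z | β ≤ D z} ≤ hausdorffDist {z | α ≤ D z} {z | β ≤ D z} :=
      infDist_le_hausdorffDist_of_mem hx hfin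
    have h2 : {z | β ≤ D z} ⊆ closure {z | α < D z} := by
      intro z hz
      exact subset_closure (lt_of_lt_of_le hαβ hz)
    have h3 : ε ≤ infDist x {z | β ≤ D z} :=
      infDist_le_infDist_of_subset h2 hβne
    rw [hausdorffDist_comm] at h1
    linarith
  · -- strict monotonicity ⇒ continuity
    intro hsm α₀ hα₀ ε hε
    set S : Set (EuclideanSpace ℝ (Fin d)) := {z | α₀ ≤ D z} with hS
    have hSne : S.Nonempty := hne α₀ hα₀.2.le
    have hScpt : IsCompact S := hcompact α₀ hα₀.1
    -- Part 1: inner approximation via strict monotonicity (for β slightly above α₀)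
    have hcover : S ⊆ ⋃ x ∈ S, ball x (ε / 4) := by
      intro z hz
      exact Set.mem_biUnion hz (mem_ball_self (by linarith))
    obtain ⟨t, htS, htfin, htcov⟩ :=
      hScpt.elim_finite_subcover_image (fun x _ => isOpen_ball) hcover
    have htne : t.Nonempty := by
      obtain ⟨z, hz⟩ := hSne
      obtain ⟨x, hx, -⟩ := Set.mem_iUnion₂.1 (htcov hz)
      exact ⟨x, hx⟩
    have hchoice : ∀ x ∈ t, ∃ y, α₀ < D y ∧ dist x y < ε / 4 := by
      intro x hx
      have hxS : x ∈ S := htS hx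
      have hxcl : x ∈ closure {z | α₀ < D z} := by
        rw [← hsm α₀ hα₀]; exact hxS
      obtain ⟨y, hy1, hy2⟩ := Metric.mem_closure_iff.1 hxcl (ε / 4) (by linarith)
      exact ⟨y, hy1, hy2⟩
    choose! y hy1 hy2 using hchoice
    have htfne : htfin.toFinset.Nonempty := by
      obtain ⟨x, hx⟩ := htne
      exact ⟨x, htfin.mem_toFinset.2 hx⟩
    set δ₁ := htfin.toFinset.inf' htfne (fun x => D (y x) - α₀) with hδ₁
    have hδ₁pos : 0 < δ₁ := by
      rw [hδ₁, Finset.lt_inf'_iff]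
      intro x hx
      have := hy1 x (htfin.mem_toFinset.1 hx)
      linarith
    have hδ₁le : ∀ x ∈ t, δ₁ ≤ D (y x) - α₀ := by
      intro x hx
      exact Finset.inf'_le _ (htfin.mem_toFinset.2 hx)
    -- claim B: for β < α₀ + δ₁, points of S are ε/2-close to {β ≤ D}
    have claimB : ∀ β : ℝ, β < α₀ + δ₁ → ∀ x' ∈ S, infDist x' {z | β ≤ D z} ≤ ε / 2 := by
      intro β hβ x' hx'
      obtain ⟨x, hx, hx'ball⟩ := Set.mem_iUnion₂.1 (htcov hx')
      have hymem : y x ∈ {z | β ≤ D z} := by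
        have := hδ₁le x hx
        show β ≤ D (y x)
        linarith
      have hdist : dist x' (y x) < ε / 2 := by
        have h1 : dist x' x < ε / 4 := mem_ball.1 hx'ball
        have h2 : dist x (y x) < ε / 4 := hy2 x hx
        calc dist x' (y x) ≤ dist x' x + dist x (y x) := dist_triangle _ _ _
          _ < ε / 2 := by linarith
      exact le_of_lt (lt_of_le_of_lt (infDist_le_dist_of_mem hymem) hdist)
    -- Part 2: outer approximation via compactness (for β slightly below α₀)
    set b : ℕ → ℝ := fun n => α₀ - α₀ / (n + 2) with hb
    have hbpos : ∀ n, 0 < b n := by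
      intro n
      have h1 : α₀ / ((n : ℝ) + 2) < α₀ := by
        apply div_lt_self hα₀.1
        have : (0 : ℝ) ≤ (n : ℝ) := Nat.cast_nonneg n
        linarith
      simpa [hb] using sub_pos.2 h1
    have hblt : ∀ n, b n < α₀ := by
      intro n
      have : 0 < α₀ / ((n : ℝ) + 2) := by
        apply div_pos hα₀.1
        have : (0 : ℝ) ≤ (n : ℝ) := Nat.cast_nonneg n
        linarith
      simp only [hb]; linarith
    have hbmono : ∀ n, b n ≤ b (n + 1) := by
      intro n
      have h2 : (0 : ℝ) < (n : ℝ) + 2 := by positivity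
      have h3 : (n : ℝ) + 2 ≤ (n : ℝ) + 1 + 2 := by linarith
      have := div_le_div_of_nonneg_left hα₀.1.le h2 h3
      simp only [hb, Nat.cast_add, Nat.cast_one]
      linarith [div_le_div_of_nonneg_left hα₀.1.le h2 h3]
    have hbtend : Tendsto b atTop (nhds α₀) := by
      have h1 : Tendsto (fun n : ℕ => ((n : ℝ) + 2)) atTop atTop :=
        tendsto_atTop_add_const_right _ _ tendsto_natCast_atTop_atTop
      have h2 : Tendsto (fun n : ℕ => α₀ / ((n : ℝ) + 2)) atTop (nhds 0) :=
        Tendsto.div_atTop tendsto_const_nhds h1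
      have h3 : Tendsto (fun n : ℕ => α₀ - α₀ / ((n : ℝ) + 2)) atTop (nhds (α₀ - 0)) :=
        Tendsto.sub tendsto_const_nhds h2
      simpa [hb] using h3
    set T : Set (EuclideanSpace ℝ (Fin d)) := thickening (ε / 2) S with hT
    have hST : S ⊆ T := self_subset_thickening (by linarith) S
    have hexn : ∃ n, {z | b n ≤ D z} ⊆ T := by
      by_contra hcon
      push_neg at hcon
      set K : ℕ → Set (EuclideanSpace ℝ (Fin d)) := fun n => {z | b n ≤ D z} \ T with hK
      have hKcl : ∀ n, IsClosed (K n) :=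
        fun n => (hclosed (b n)).sdiff isOpen_thickening
      have hKsub : ∀ n, K (n + 1) ⊆ K n := by
        intro n z hz
        exact ⟨le_trans (hbmono n) hz.1, hz.2⟩
      have hKne : ∀ n, (K n).Nonempty := by
        intro n
        obtain ⟨z, hz1, hz2⟩ := Set.not_subset.1 (hcon n)
        exact ⟨z, hz1, hz2⟩
      have hK0 : IsCompact (K 0) :=
        (hcompact (b 0) (hbpos 0)).of_isClosed_subset (hKcl 0) diff_subset
      obtain ⟨z, hz⟩ := IsCompact.nonempty_iInter_of_sequence_nonempty_isCompact_isClosed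
        K hKsub hKne hK0 hKcl
      have hzall : ∀ n, b n ≤ D z := fun n => (Set.mem_iInter.1 hz n).1
      have hzS : z ∈ S := by
        show α₀ ≤ D z
        exact le_of_tendsto hbtend (Filter.Eventually.of_forall hzall)
      exact (Set.mem_iInter.1 hz 0).2 (hST hzS)
    obtain ⟨n, hn⟩ := hexn
    -- claim A: for β > b n, points of {β ≤ D} are ε/2-close to S
    have claimA : ∀ β : ℝ, b n ≤ β → ∀ x' ∈ {z | β ≤ D z}, infDist x' S ≤ ε / 2 := by
      intro β hβ x' hx'
      have : x' ∈ T := hn (le_trans hβ hx')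
      obtain ⟨w, hw1, hw2⟩ := mem_thickening_iff.1 this
      exact le_of_lt (lt_of_le_of_lt (infDist_le_dist_of_mem hw1) hw2)
    -- combine
    refine ⟨min δ₁ (α₀ - b n), lt_min hδ₁pos (by linarith [hblt n]), ?_⟩
    intro β hβ hβδ
    have habs := abs_lt.1 hβδ
    have hβlt : β < α₀ + δ₁ := by
      have := habs.2
      have h2 : min δ₁ (α₀ - b n) ≤ δ₁ := min_le_left _ _
      linarith
    have hβgt : b n < β := by
      have := habs.1
      have h2 : min δ₁ (α₀ - b n) ≤ α₀ - b n := min_le_right _ _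
      linarith
    have hHle : hausdorffDist {z | β ≤ D z} S ≤ ε / 2 := by
      apply hausdorffDist_le_of_infDist (by linarith)
      · intro x hx
        exact claimA β hβgt.le x hx
      · intro x hx
        exact claimB β hβlt x hx
    calc hausdorffDist {z | β ≤ D z} S ≤ ε / 2 := hHle
      _ < ε := by linarith
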